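/- arXiv:1207.5815 — 2 statements merged into one kernel-verified Lean document; each statement's English description precedes it below -/
import Mathlib

section
/- Let n ≥ 1, T ≥ 1, let W be an n×n real matrix, let ε, 𝓛, c₁,…,c_n be real numbers with 𝓛 ≥ 0, let φ : ℝ → ℝ be continuous with |φ(u) − φ(v)| ≤ 𝓛·|u − v| for all u, v, and let τ_{ij} ∈ {0, 1, …, T−1} for all i, j. If |1 − ε| + 𝓛·ρ(|W|) < 1, then there exists x̃ ∈ ℝⁿ with x̃_j = (1 − ε)·x̃_j + Σ_{i=1}^n W_{ij}·φ(x̃_i) + c_j for all j, such that every sequence u : ℕ → ℝⁿ satisfying u(k+T)_j = (1 − ε)·u(k+T−1−τ_{jj})_j + Σ_{i=1}^n W_{ij}·φ(u(k+T−1−τ_{ij})_i) + c_j for all k ≥ 0 and all j converges to x̃. -/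
open Matrix


open Filter

/-- The spectral radius of a real square matrix: the supremum of the absolute values
of its complex eigenvalues. -/
noncomputable def specRad {n : ℕ} (A : Matrix (Fin n) (Fin n) ℝ) : ℝ :=
  sSup ((fun (μ : ℂ) => ‖μ‖) '' spectrum ℂ (A.map (fun x => (x : ℂ))))

section aux
attribute [local instance] Matrix.linftyOpSeminormedAddCommGroup
  Matrix.linftyOpNormedAddCommGroup Matrix.linftyOpNormedSpace
  Matrix.linftyOpSemiNormedRing Matrix.linftyOpNormedRing Matrix.linftyOpNormedAlgebra

variable {n : ℕ}

lemma myCompl : CompleteSpace (Matrix (Fin n) (Fin n) ℂ) :=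
  FiniteDimensional.complete ℂ (Matrix (Fin n) (Fin n) ℂ)

attribute [local instance] myCompl

lemma specRad_nonneg (hn : 1 ≤ n) (A : Matrix (Fin n) (Fin n) ℝ) : 0 ≤ specRad A := by
  haveI : Nonempty (Fin n) := ⟨⟨0, hn⟩⟩
  obtain ⟨μ, hμ⟩ := spectrum.nonempty (A.map (fun x => (x : ℂ)))
  have hb : BddAbove ((fun (μ : ℂ) => ‖μ‖) '' spectrum ℂ (A.map (fun x => (x : ℂ)))) :=
    ((spectrum.isCompact _).image continuous_norm).bddAbove
  exact le_trans (norm_nonneg μ) (le_csSup hb ⟨μ, hμ, rfl⟩)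

lemma spec_transpose (A : Matrix (Fin n) (Fin n) ℂ) :
    spectrum ℂ Aᵀ = spectrum ℂ A := by
  ext z
  simp only [spectrum.mem_iff, not_iff_not, Matrix.isUnit_iff_isUnit_det]
  have : (algebraMap ℂ (Matrix (Fin n) (Fin n) ℂ)) z - Aᵀ
       = ((algebraMap ℂ (Matrix (Fin n) (Fin n) ℂ)) z - A)ᵀ := by
    rw [Matrix.transpose_sub]
    congr 1
    simp [Matrix.algebraMap_eq_diagonal]
  rw [this, Matrix.det_transpose]

end aux

section aux2
attribute [local instance] Matrix.linftyOpSeminormedAddCommGroup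
  Matrix.linftyOpNormedAddCommGroup Matrix.linftyOpNormedSpace
  Matrix.linftyOpSemiNormedRing Matrix.linftyOpNormedRing Matrix.linftyOpNormedAlgebra
  myCompl

variable {n : ℕ}

lemma entry_pow_nonneg (B : Matrix (Fin n) (Fin n) ℝ) (hB : ∀ i j, 0 ≤ B i j) :
    ∀ K i j, 0 ≤ (B ^ K) i j := by
  intro K
  induction K with
  | zero => intro i j; simp [Matrix.one_apply]; positivity
  | succ K ih =>
      intro i j
      rw [pow_succ, Matrix.mul_apply]
      exact Finset.sum_nonneg fun l _ => mul_nonneg (ih i l) (hB l j)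

lemma exists_weight (hn : 1 ≤ n) (A : Matrix (Fin n) (Fin n) ℝ)
    (hA : ∀ i j, 0 ≤ A i j) {r : ℝ} (hr : 0 < r) (hspec : specRad A < r) :
    ∃ ξ : Fin n → ℝ, (∀ j, 0 < ξ j) ∧ ∀ j, ∑ i, A i j * ξ i < r * ξ j := by
  haveI : Nonempty (Fin n) := ⟨⟨0, hn⟩⟩
  set C : Matrix (Fin n) (Fin n) ℝ := Aᵀ with hC
  set Cc : Matrix (Fin n) (Fin n) ℂ := Complex.ofRealHom.mapMatrix C with hCc
  -- spectral radius bound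
  have hspecCc : spectrum ℂ Cc = spectrum ℂ (A.map (fun x => (x : ℂ))) := by
    have : Cc = (A.map (fun x => (x : ℂ)))ᵀ := by
      rw [hCc, RingHom.mapMatrix_apply, hC, Matrix.transpose_map]; rfl
    rw [this, spec_transpose]
  have hb : BddAbove ((fun (μ : ℂ) => ‖μ‖) '' spectrum ℂ (A.map (fun x => (x : ℂ)))) :=
    ((spectrum.isCompact _).image continuous_norm).bddAbove
  have hsr : spectralRadius ℂ Cc < ENNReal.ofReal r := by
    refine lt_of_le_of_lt ?_ ((ENNReal.ofReal_lt_ofReal_iff hr).mpr hspec)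
    rw [spectralRadius]
    refine iSup₂_le fun k hk => ?_
    rw [hspecCc] at hk
    have h1 : ‖k‖ ≤ specRad A := le_csSup hb ⟨k, hk, rfl⟩
    rw [← ENNReal.ofReal_coe_nnreal, coe_nnnorm]
    exact ENNReal.ofReal_le_ofReal h1
  -- Gelfand
  have htd := spectrum.pow_nnnorm_pow_one_div_tendsto_nhds_spectralRadius Cc
  have hev : ∀ᶠ K : ℕ in atTop,
      ((‖Cc ^ K‖₊ : ENNReal) ^ (1 / (K : ℝ)) < ENNReal.ofReal r ∧ 1 ≤ K) :=
    (htd.eventually_lt_const hsr).and (eventually_ge_atTop 1)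
  obtain ⟨K, hKlt, hK1⟩ := hev.exists
  have hK0 : (0:ℝ) < K := by exact_mod_cast hK1
  -- convert to real inequality ‖Cc^K‖ < r^K
  have hKr : ‖Cc ^ K‖ < r ^ K := by
    have h2 : ((‖Cc ^ K‖₊ ^ (1 / (K:ℝ)) : NNReal) : ENNReal) < ENNReal.ofReal r := by
      rwa [ENNReal.coe_rpow_of_nonneg _ (by positivity)]
    rw [ENNReal.ofReal, ENNReal.coe_lt_coe] at h2
    have h3 : (‖Cc ^ K‖ : ℝ) ^ (1 / (K:ℝ)) < r := by
      calc (‖Cc ^ K‖ : ℝ) ^ (1 / (K:ℝ)) = ((‖Cc ^ K‖₊ ^ (1 / (K:ℝ)) : NNReal) : ℝ) := by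
            rw [NNReal.coe_rpow, coe_nnnorm]
        _ < r := by
            have := (NNReal.coe_lt_coe.mpr h2)
            rwa [Real.coe_toNNReal r hr.le] at this
    have h4 := Real.rpow_lt_rpow (Real.rpow_nonneg (norm_nonneg _) _) h3 hK0
    rwa [← Real.rpow_mul (norm_nonneg _), one_div_mul_cancel (ne_of_gt hK0),
      Real.rpow_one, Real.rpow_natCast] at h4
  -- row sums of C^K are < r^K
  have hCpow : Cc ^ K = (C ^ K).map (fun x => (x : ℂ)) := by
    rw [hCc, ← map_pow]; rfl
  have hCnn : ∀ i j, 0 ≤ C i j := fun i j => hA j i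
  have hrow : ∀ j, ∑ i, (C ^ K) j i < r ^ K := by
    intro j
    have h5 : (∑ i, ‖(Cc ^ K) j i‖₊) ≤ ‖Cc ^ K‖₊ := by
      rw [Matrix.linfty_opNNNorm_def]
      exact Finset.le_sup (f := fun i => ∑ l, ‖(Cc ^ K) i l‖₊) (Finset.mem_univ j)
    have h6 : ∑ i, (C ^ K) j i ≤ ‖Cc ^ K‖ := by
      calc ∑ i, (C ^ K) j i = ∑ i, ‖(Cc ^ K) j i‖ := by
            refine Finset.sum_congr rfl fun i _ => ?_
            rw [hCpow]
            show _ = ‖((C ^ K) j i : ℂ)‖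
            rw [Complex.norm_real, Real.norm_eq_abs,
              abs_of_nonneg (entry_pow_nonneg C hCnn K j i)]
        _ ≤ ‖Cc ^ K‖ := by
            have := NNReal.coe_le_coe.mpr h5
            rwa [NNReal.coe_sum] at this
    exact lt_of_le_of_lt h6 hKr
  -- build the weight vector
  set g : ℕ → Fin n → ℝ := fun k j => ∑ i, (C ^ k) j i with hg
  have hg0 : ∀ j, g 0 j = 1 := by
    intro j; simp [hg, Matrix.one_apply]
  have hgnn : ∀ k j, 0 ≤ g k j :=
    fun k j => Finset.sum_nonneg fun i _ => entry_pow_nonneg C hCnn k j i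
  have hgsucc : ∀ k j, g (k + 1) j = ∑ i, C j i * g k i := by
    intro k j
    rw [hg]
    simp only
    calc ∑ l, (C ^ (k+1)) j l = ∑ l, ∑ i, C j i * (C ^ k) i l := by
          refine Finset.sum_congr rfl fun l _ => ?_
          rw [pow_succ', Matrix.mul_apply]
      _ = ∑ i, C j i * ∑ l, (C ^ k) i l := by
          rw [Finset.sum_comm]
          exact Finset.sum_congr rfl fun i _ => by rw [Finset.mul_sum]
  set ξ : Fin n → ℝ := fun j => ∑ k ∈ Finset.range K, r⁻¹ ^ k * g k j with hξ
  have hξpos : ∀ j, 0 < ξ j := by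
    intro j
    have h00 : r⁻¹ ^ 0 * g 0 j = 1 := by rw [pow_zero, hg0, one_mul]
    have h7 := Finset.single_le_sum (f := fun k => r⁻¹ ^ k * g k j)
      (fun k _ => mul_nonneg (by positivity) (hgnn k j))
      (Finset.mem_range.mpr hK1)
    exact lt_of_lt_of_le one_pos (le_trans (le_of_eq h00.symm) h7)
  refine ⟨ξ, hξpos, fun j => ?_⟩
  have hrinv : r * r⁻¹ = 1 := mul_inv_cancel₀ hr.ne'
  have key : ∑ i, A i j * ξ i = r * (ξ j + r⁻¹ ^ K * g K j - 1) := by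
    calc ∑ i, A i j * ξ i
        = ∑ i, ∑ k ∈ Finset.range K, r⁻¹ ^ k * (C j i * g k i) := by
          refine Finset.sum_congr rfl fun i _ => ?_
          rw [show A i j = C j i from rfl, Finset.mul_sum]
          exact Finset.sum_congr rfl fun k _ => by ring
      _ = ∑ k ∈ Finset.range K, ∑ i, r⁻¹ ^ k * (C j i * g k i) := Finset.sum_comm
      _ = ∑ k ∈ Finset.range K, r⁻¹ ^ k * g (k + 1) j := by
          refine Finset.sum_congr rfl fun k _ => ?_
          rw [hgsucc, Finset.mul_sum]
      _ = ∑ k ∈ Finset.range K, r * (r⁻¹ ^ (k + 1) * g (k + 1) j) := by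
          refine Finset.sum_congr rfl fun k _ => ?_
          rw [pow_succ]
          calc r⁻¹ ^ k * g (k+1) j = (r * r⁻¹) * (r⁻¹ ^ k * g (k+1) j) := by
                rw [hrinv, one_mul]
            _ = r * (r⁻¹ ^ k * r⁻¹ * g (k + 1) j) := by ring
      _ = r * ∑ k ∈ Finset.range K, r⁻¹ ^ (k + 1) * g (k + 1) j := by
          rw [Finset.mul_sum]
      _ = r * (ξ j + r⁻¹ ^ K * g K j - 1) := by
          congr 1
          have hs := Finset.sum_range_succ' (fun k => r⁻¹ ^ k * g k j) K
          have hs2 := Finset.sum_range_succ (fun k => r⁻¹ ^ k * g k j) K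
          have ht0 : r⁻¹ ^ 0 * g 0 j = 1 := by rw [pow_zero, hg0, one_mul]
          have hξj : ξ j = ∑ k ∈ Finset.range K, r⁻¹ ^ k * g k j := rfl
          rw [hξj]
          rw [ht0] at hs
          linarith [hs, hs2]
  rw [key]
  have h8 : r⁻¹ ^ K * g K j < 1 := by
    have := (hrow j)
    have h9 : r⁻¹ ^ K * g K j < r⁻¹ ^ K * r ^ K :=
      mul_lt_mul_of_pos_left this (by positivity)
    rwa [← mul_pow, inv_mul_cancel₀ hr.ne', one_pow] at h9
  have := hξpos j
  nlinarith

end aux2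

/-- Stability of time-delayed Cohen–Grossberg neural networks with non-distributed
delays: if `|1 − ε| + 𝓛·ρ(|W|) < 1` then there is a fixed point `p` to which every
orbit of the delayed network converges. -/
theorem delayed_cohenGrossberg_stability
    {n T : ℕ} (hn : 1 ≤ n) (hT : 1 ≤ T)
    (W : Matrix (Fin n) (Fin n) ℝ) (ε 𝓛 : ℝ) (c : Fin n → ℝ) (h𝓛 : 0 ≤ 𝓛)
    (φ : ℝ → ℝ) (hφc : Continuous φ)
    (hφ : ∀ u v : ℝ, |φ u - φ v| ≤ 𝓛 * |u - v|)
    (τ : Fin n → Fin n → ℕ) (hτ : ∀ i j, τ i j ≤ T - 1)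
    (hρ : |1 - ε| + 𝓛 * specRad (Matrix.of fun i j => |W i j|) < 1) :
    ∃ p : Fin n → ℝ,
      (∀ j, p j = (1 - ε) * p j + ∑ i, W i j * φ (p i) + c j) ∧
      ∀ u : ℕ → Fin n → ℝ,
        (∀ k, ∀ j, u (k + T) j =
          (1 - ε) * u (k + T - 1 - τ j j) j + ∑ i, W i j * φ (u (k + T - 1 - τ i j) i) + c j) →
        Tendsto u atTop (nhds p) := by
  haveI : Nonempty (Fin n) := ⟨⟨0, hn⟩⟩
  -- Step 1: weights ξ and contraction factor q
  obtain ⟨ξ, hξpos, q, hq0, hq1, hq⟩ :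
      ∃ ξ : Fin n → ℝ, (∀ j, 0 < ξ j) ∧ ∃ q : ℝ, 0 ≤ q ∧ q < 1 ∧
        ∀ j, |1 - ε| * ξ j + 𝓛 * ∑ i, |W i j| * ξ i ≤ q * ξ j := by
    rcases eq_or_lt_of_le h𝓛 with h0 | h0
    · refine ⟨fun _ => 1, fun _ => one_pos, |1 - ε|, abs_nonneg _, ?_, ?_⟩
      · rw [← h0] at hρ
        simpa using hρ
      · intro j
        rw [← h0]
        simp
    · set A : Matrix (Fin n) (Fin n) ℝ := Matrix.of fun i j => |W i j| with hA
      have hρA : 0 ≤ specRad A := specRad_nonneg hn A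
      have hLρ : 0 ≤ 𝓛 * specRad A := mul_nonneg h𝓛 hρA
      have habs1 : |1 - ε| < 1 := by linarith
      have hr : 0 < (1 - |1 - ε|) / 𝓛 := div_pos (by linarith) h0
      have hspec : specRad A < (1 - |1 - ε|) / 𝓛 := by
        rw [lt_div_iff₀ h0]
        nlinarith
      obtain ⟨ξ, hξp, hlt⟩ := exists_weight hn A (fun i j => abs_nonneg _) hr hspec
      have hlt' : ∀ j, |1 - ε| * ξ j + 𝓛 * ∑ i, |W i j| * ξ i < ξ j := by
        intro j
        have h2 : 𝓛 * (∑ i, A i j * ξ i) < 𝓛 * ((1 - |1 - ε|) / 𝓛 * ξ j) :=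
          mul_lt_mul_of_pos_left (hlt j) h0
        have h3 : 𝓛 * ((1 - |1 - ε|) / 𝓛 * ξ j) = (1 - |1 - ε|) * ξ j := by
          field_simp
        have h4 : (∑ i, A i j * ξ i) = ∑ i, |W i j| * ξ i := rfl
        rw [h3, h4] at h2
        linarith
      refine ⟨ξ, hξp, Finset.univ.sup' Finset.univ_nonempty
        (fun j => (|1 - ε| * ξ j + 𝓛 * ∑ i, |W i j| * ξ i) / ξ j), ?_, ?_, ?_⟩
      · set j₀ := Classical.arbitrary (Fin n) with hj₀
        refine le_trans ?_ (Finset.le_sup'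
          (f := fun j => (|1 - ε| * ξ j + 𝓛 * ∑ i, |W i j| * ξ i) / ξ j)
          (Finset.mem_univ j₀))
        have h1 := hξp j₀
        have h2 : 0 ≤ ∑ i, |W i j₀| * ξ i :=
          Finset.sum_nonneg fun i _ => mul_nonneg (abs_nonneg _) (hξp i).le
        have h3 : 0 ≤ |1 - ε| * ξ j₀ + 𝓛 * ∑ i, |W i j₀| * ξ i :=
          add_nonneg (mul_nonneg (abs_nonneg _) h1.le) (mul_nonneg h𝓛 h2)
        positivity
      · rw [Finset.sup'_lt_iff]
        intro j _
        rw [div_lt_one (hξp j)]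
        exact hlt' j
      · intro j
        rw [← div_le_iff₀ (hξp j)]
        exact Finset.le_sup'
          (f := fun j => (|1 - ε| * ξ j + 𝓛 * ∑ i, |W i j| * ξ i) / ξ j)
          (Finset.mem_univ j)
  -- Step 2: the key one-step estimate
  have hstep : ∀ (x y : Fin n → ℝ) (d : ℝ), 0 ≤ d → (∀ i, |x i - y i| ≤ ξ i * d) →
      ∀ (z z' : ℝ) (j : Fin n), |z - z'| ≤ ξ j * d →
      |((1 - ε) * z + ∑ i, W i j * φ (x i) + c j)
        - ((1 - ε) * z' + ∑ i, W i j * φ (y i) + c j)| ≤ q * ξ j * d := by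
    intro x y d hd hxy z z' j hz
    have h1 : ((1 - ε) * z + ∑ i, W i j * φ (x i) + c j)
        - ((1 - ε) * z' + ∑ i, W i j * φ (y i) + c j)
        = (1 - ε) * (z - z') + ∑ i, (W i j * φ (x i) - W i j * φ (y i)) := by
      rw [Finset.sum_sub_distrib]
      ring
    rw [h1]
    calc |(1 - ε) * (z - z') + ∑ i, (W i j * φ (x i) - W i j * φ (y i))|
        ≤ |(1 - ε) * (z - z')| + |∑ i, (W i j * φ (x i) - W i j * φ (y i))| := abs_add_le _ _
      _ ≤ |1 - ε| * |z - z'| + ∑ i, |W i j * φ (x i) - W i j * φ (y i)| := by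
          rw [abs_mul]
          gcongr
          exact Finset.abs_sum_le_sum_abs _ _
      _ ≤ |1 - ε| * (ξ j * d) + ∑ i, |W i j| * (𝓛 * (ξ i * d)) := by
          refine add_le_add (mul_le_mul_of_nonneg_left hz (abs_nonneg _))
            (Finset.sum_le_sum fun i _ => ?_)
          rw [← mul_sub, abs_mul]
          exact mul_le_mul_of_nonneg_left
            (le_trans (hφ _ _) (mul_le_mul_of_nonneg_left (hxy i) h𝓛)) (abs_nonneg _)
      _ = (|1 - ε| * ξ j + 𝓛 * ∑ i, |W i j| * ξ i) * d := by
          have h9 : ∑ i, |W i j| * (𝓛 * (ξ i * d)) = (𝓛 * ∑ i, |W i j| * ξ i) * d := by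
            rw [Finset.mul_sum, Finset.sum_mul]
            exact Finset.sum_congr rfl fun i _ => by ring
          rw [h9]
          ring
      _ ≤ (q * ξ j) * d := mul_le_mul_of_nonneg_right (hq j) hd
      _ = q * ξ j * d := by ring
  -- Step 3: fixed point via contraction on the rescaled system
  set G : (Fin n → ℝ) → (Fin n → ℝ) :=
    fun y j => ((1 - ε) * (ξ j * y j) + ∑ i, W i j * φ (ξ i * y i) + c j) / ξ j with hG
  have hGdiff : ∀ y y' : Fin n → ℝ, ∀ j, (G y j - G y' j) * ξ j
      = ((1 - ε) * (ξ j * y j) + ∑ i, W i j * φ (ξ i * y i) + c j)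
        - ((1 - ε) * (ξ j * y' j) + ∑ i, W i j * φ (ξ i * y' i) + c j) := by
    intro y y' j
    have hξ := (hξpos j).ne'
    rw [hG]
    field_simp
  have hlip : LipschitzWith ⟨q, hq0⟩ G := by
    apply LipschitzWith.of_dist_le_mul
    intro y y'
    show dist (G y) (G y') ≤ q * dist y y'
    rw [dist_pi_le_iff (mul_nonneg hq0 dist_nonneg)]
    intro j
    rw [Real.dist_eq]
    rw [← mul_le_mul_iff_of_pos_right (hξpos j)]
    have hb : ∀ i, |ξ i * y i - ξ i * y' i| ≤ ξ i * dist y y' := by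
      intro i
      rw [← mul_sub, abs_mul, abs_of_pos (hξpos i)]
      exact mul_le_mul_of_nonneg_left
        (by rw [← Real.dist_eq]; exact dist_le_pi_dist y y' i) (hξpos i).le
    have := hstep (fun i => ξ i * y i) (fun i => ξ i * y' i) (dist y y') dist_nonneg hb
      (ξ j * y j) (ξ j * y' j) j (hb j)
    calc |G y j - G y' j| * ξ j = |(G y j - G y' j) * ξ j| := by
          rw [abs_mul, abs_of_pos (hξpos j)]
      _ ≤ q * ξ j * dist y y' := by rw [hGdiff y y']; exact this
      _ = q * dist y y' * ξ j := by ring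
  have hcontr : ContractingWith ⟨q, hq0⟩ G := ⟨by exact_mod_cast hq1, hlip⟩
  set p₀ : Fin n → ℝ := hcontr.fixedPoint G with hp₀
  have hfix0 : G p₀ = p₀ := hcontr.fixedPoint_isFixedPt
  set p : Fin n → ℝ := fun j => ξ j * p₀ j with hp
  have hfixed : ∀ j, p j = (1 - ε) * p j + ∑ i, W i j * φ (p i) + c j := by
    intro j
    have h5 : G p₀ j = p₀ j := by rw [hfix0]
    rw [hG] at h5
    simp only at h5
    rw [div_eq_iff (hξpos j).ne'] at h5
    calc p j = ξ j * p₀ j := rfl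
      _ = p₀ j * ξ j := mul_comm _ _
      _ = (1 - ε) * (ξ j * p₀ j) + ∑ i, W i j * φ (ξ i * p₀ i) + c j := h5.symm
      _ = (1 - ε) * p j + ∑ i, W i j * φ (p i) + c j := rfl
  refine ⟨p, hfixed, ?_⟩
  -- Step 4: convergence of every orbit
  intro u hu
  have hTpos : 0 < T := hT
  set S : ℝ := Finset.sup' (Finset.range T) ⟨0, Finset.mem_range.mpr hTpos⟩
    (fun t => Finset.sup' Finset.univ Finset.univ_nonempty (fun j => |u t j - p j| / ξ j))
    with hS
  have hSb : ∀ t, t < T → ∀ j, |u t j - p j| ≤ S * ξ j := by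
    intro t ht j
    rw [← div_le_iff₀ (hξpos j), hS]
    exact le_trans (Finset.le_sup' (f := fun j => |u t j - p j| / ξ j) (Finset.mem_univ j))
      (Finset.le_sup'
        (f := fun t => Finset.univ.sup' Finset.univ_nonempty (fun j => |u t j - p j| / ξ j))
        (Finset.mem_range.mpr ht))
  have hS0 : 0 ≤ S := by
    refine le_trans ?_ (le_trans
      (Finset.le_sup' (f := fun j => |u 0 j - p j| / ξ j)
        (Finset.mem_univ (Classical.arbitrary (Fin n))))
      (Finset.le_sup'
        (f := fun t => Finset.univ.sup' Finset.univ_nonempty (fun j => |u t j - p j| / ξ j))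
        (Finset.mem_range.mpr hTpos)))
    have := hξpos (Classical.arbitrary (Fin n))
    positivity
  have main : ∀ k, ∀ j, |u k j - p j| ≤ S * q ^ (k / T) * ξ j := by
    intro k
    induction k using Nat.strong_induction_on with
    | _ k ih =>
      intro j
      rcases lt_or_ge k T with hk | hk
      · rw [Nat.div_eq_of_lt hk, pow_zero, mul_one]
        exact hSb k hk j
      · set m : ℕ := k - T with hm
        have hkm : m + T = k := Nat.sub_add_cancel hk
        have hkdiv : k / T = m / T + 1 := by
          rw [Nat.div_eq_sub_div hTpos hk]
        have htlt : ∀ i : Fin n, m + T - 1 - τ i j < k := by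
          intro i
          omega
        have htm : ∀ i : Fin n, m ≤ m + T - 1 - τ i j := by
          intro i
          have := hτ i j
          omega
        have hb1 : ∀ i, |u (m + T - 1 - τ i j) i - p i| ≤ ξ i * (S * q ^ (m / T)) := by
          intro i
          refine le_trans (ih (m + T - 1 - τ i j) (htlt i) i) ?_
          have h6 : q ^ ((m + T - 1 - τ i j) / T) ≤ q ^ (m / T) :=
            pow_le_pow_of_le_one hq0 hq1.le (Nat.div_le_div_right (htm i))
          calc S * q ^ ((m + T - 1 - τ i j) / T) * ξ i
              ≤ S * q ^ (m / T) * ξ i :=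
                mul_le_mul_of_nonneg_right (mul_le_mul_of_nonneg_left h6 hS0) (hξpos i).le
            _ = ξ i * (S * q ^ (m / T)) := by ring
        have hrec := hu m j
        have hd : u (m + T) j - p j
            = ((1 - ε) * u (m + T - 1 - τ j j) j
                + ∑ i, W i j * φ (u (m + T - 1 - τ i j) i) + c j)
              - ((1 - ε) * p j + ∑ i, W i j * φ (p i) + c j) :=
          congrArg₂ (fun a b => a - b) hrec (hfixed j)
        have hest := hstep (fun i => u (m + T - 1 - τ i j) i) p (S * q ^ (m / T))
          (by positivity) hb1 (u (m + T - 1 - τ j j) j) (p j) j (hb1 j)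
        rw [← hkm]
        calc |u (m + T) j - p j|
            = |((1 - ε) * u (m + T - 1 - τ j j) j
                + ∑ i, W i j * φ (u (m + T - 1 - τ i j) i) + c j)
              - ((1 - ε) * p j + ∑ i, W i j * φ (p i) + c j)| := by rw [hd]
          _ ≤ q * ξ j * (S * q ^ (m / T)) := hest
          _ = S * q ^ (m / T + 1) * ξ j := by rw [pow_succ]; ring
          _ = S * q ^ ((m + T) / T) * ξ j := by rw [hkm, hkdiv]
  rw [tendsto_pi_nhds]
  intro j
  rw [tendsto_iff_dist_tendsto_zero]
  have hdivT : Tendsto (fun k : ℕ => k / T) atTop atTop := by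
    apply tendsto_atTop_atTop.mpr
    intro b
    exact ⟨b * T, fun a ha => (Nat.le_div_iff_mul_le hTpos).mpr ha⟩
  have hq' : Tendsto (fun k : ℕ => (S * ξ j) * q ^ (k / T)) atTop (nhds 0) := by
    have h7 := ((tendsto_pow_atTop_nhds_zero_of_lt_one hq0 hq1).comp hdivT).const_mul (S * ξ j)
    simpa using h7
  refine squeeze_zero (fun k => dist_nonneg) (fun k => ?_) hq'
  rw [Real.dist_eq]
  calc |u k j - p j| ≤ S * q ^ (k / T) * ξ j := main k j
    _ = (S * ξ j) * q ^ (k / T) := by ring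
end

section
/- Let n ≥ 1, let M be a nonnegative irreducible n×n real matrix, fix indices ℓ, m and reals α > 0, 𝓛 ≥ 0 with α + 𝓛 = M_{ℓm}, and let θ > 0. Then: (1) θ ≤ ρ(M_θ) ≤ ρ(M) if and only if θ ≤ ρ(M); and (2) ρ(M) < ρ(M_θ) < θ if and only if θ > ρ(M). -/
/-- The modified matrix `M_θ(α, 𝓛) ∈ ℝ^{(n+1)×(n+1)}`: rows and columns are indexed by
`{0, 1, …, n}` (index `i.succ` corresponding to the original index `i`), the entry
`(ℓ, m)` of `M` is replaced by `𝓛`, the entry `(0, m)` is `α`, the entry `(ℓ, 0)` is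
`θ`, and all other entries involving the new index `0` are `0`. -/
def modMat {n : ℕ} (M : Matrix (Fin n) (Fin n) ℝ) (l m : Fin n) (α 𝓛 θ : ℝ) :
    Matrix (Fin (n + 1)) (Fin (n + 1)) ℝ :=
  Matrix.of fun i j =>
    if hi : i = 0 then (if j = m.succ then α else 0)
    else if hj : j = 0 then (if i = l.succ then θ else 0)
    else if i = l.succ ∧ j = m.succ then 𝓛
    else M (i.pred hi) (j.pred hj)

namespace SpecRadPF

open Matrix Finset Filter

attribute [local instance] Matrix.linftyOpNormedRing Matrix.linftyOpNormedAlgebra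
  Matrix.linftyOpNormedSpace

noncomputable local instance {N : ℕ} : CompleteSpace (Matrix (Fin N) (Fin N) ℂ) :=
  (by infer_instance : CompleteSpace (Matrix (Fin N) (Fin N) ℂ))

variable {N : ℕ}

/-- complexification -/
noncomputable def cx (A : Matrix (Fin N) (Fin N) ℝ) : Matrix (Fin N) (Fin N) ℂ :=
  A.map (fun x => (x : ℂ))

lemma cx_pow (A : Matrix (Fin N) (Fin N) ℝ) (k : ℕ) : cx (A ^ k) = (cx A) ^ k := by
  have h := map_pow ((Complex.ofRealHom).mapMatrix : Matrix (Fin N) (Fin N) ℝ →+* _) A k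
  exact h

lemma specRad_def (A : Matrix (Fin N) (Fin N) ℝ) :
    specRad A = sSup ((fun μ => ‖μ‖) '' spectrum ℂ (cx A)) := rfl

/-- eigenvector existence -/
lemma exists_eigvec {B : Matrix (Fin N) (Fin N) ℂ} {μ : ℂ} (h : μ ∈ spectrum ℂ B) :
    ∃ v, v ≠ 0 ∧ B.mulVec v = μ • v := by
  rw [spectrum.mem_iff, Matrix.isUnit_iff_isUnit_det, isUnit_iff_ne_zero, not_not,
    ← Matrix.exists_mulVec_eq_zero_iff] at h
  obtain ⟨v, hv, hv2⟩ := h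
  refine ⟨v, hv, ?_⟩
  rw [Matrix.sub_mulVec, Algebra.algebraMap_eq_smul_one, Matrix.smul_mulVec,
    Matrix.one_mulVec, sub_eq_zero] at hv2
  exact hv2.symm

/-- the supremum is attained -/
lemma specRad_max (hN : 0 < N) (A : Matrix (Fin N) (Fin N) ℝ) :
    ∃ μ ∈ spectrum ℂ (cx A), ‖μ‖ = specRad A ∧
      ∀ ν ∈ spectrum ℂ (cx A), ‖ν‖ ≤ specRad A := by
  have : NeZero N := ⟨hN.ne'⟩
  have hne : (spectrum ℂ (cx A)).Nonempty := spectrum.nonempty (cx A)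
  have hcpt : IsCompact (spectrum ℂ (cx A)) := spectrum.isCompact (cx A)
  have hcpt2 : IsCompact ((fun μ => ‖μ‖) '' spectrum ℂ (cx A)) :=
    hcpt.image (continuous_norm)
  have hne2 : ((fun μ => ‖μ‖) '' spectrum ℂ (cx A)).Nonempty := hne.image _
  have hmem : sSup ((fun μ => ‖μ‖) '' spectrum ℂ (cx A)) ∈
      ((fun μ => ‖μ‖) '' spectrum ℂ (cx A)) := hcpt2.sSup_mem hne2
  obtain ⟨μ, hμ, hμ2⟩ := hmem
  exact ⟨μ, hμ, hμ2, fun ν hν => le_csSup hcpt2.bddAbove ⟨ν, hν, rfl⟩⟩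

lemma specRad_nonneg (hN : 0 < N) (A : Matrix (Fin N) (Fin N) ℝ) : 0 ≤ specRad A := by
  obtain ⟨μ, _, h2, _⟩ := specRad_max hN A
  rw [← h2]; positivity

/-- entrywise nonnegativity of powers -/
lemma pow_nonneg {A : Matrix (Fin N) (Fin N) ℝ} (hA : ∀ i j, 0 ≤ A i j) (k : ℕ) :
    ∀ i j, 0 ≤ (A ^ k) i j := by
  induction k with
  | zero => intro i j; rw [pow_zero]; by_cases h : i = j <;> simp [Matrix.one_apply, h]
  | succ k ih =>
    intro i j
    rw [pow_succ, Matrix.mul_apply]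
    exact Finset.sum_nonneg fun t _ => mul_nonneg (ih i t) (hA t j)

lemma mulVec_nonneg {A : Matrix (Fin N) (Fin N) ℝ} (hA : ∀ i j, 0 ≤ A i j)
    {v : Fin N → ℝ} (hv : ∀ i, 0 ≤ v i) : ∀ i, 0 ≤ A.mulVec v i := by
  intro i
  simp only [Matrix.mulVec, dotProduct]
  exact Finset.sum_nonneg fun j _ => mul_nonneg (hA i j) (hv j)

lemma mulVec_mono {A : Matrix (Fin N) (Fin N) ℝ} (hA : ∀ i j, 0 ≤ A i j)
    {v w : Fin N → ℝ} (hvw : ∀ i, v i ≤ w i) : ∀ i, A.mulVec v i ≤ A.mulVec w i := by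
  intro i
  simp only [Matrix.mulVec, dotProduct]
  exact Finset.sum_le_sum fun j _ => mul_le_mul_of_nonneg_left (hvw j) (hA i j)

lemma single_le_mulVec {A : Matrix (Fin N) (Fin N) ℝ} (hA : ∀ i j, 0 ≤ A i j)
    {v : Fin N → ℝ} (hv : ∀ i, 0 ≤ v i) (i j : Fin N) :
    A i j * v j ≤ A.mulVec v i := by
  simp only [Matrix.mulVec, dotProduct]
  exact Finset.single_le_sum (fun t _ => mul_nonneg (hA i t) (hv t)) (Finset.mem_univ j)

/-- Collatz–Wielandt upper bound -/
lemma cw_upper (hN : 0 < N) {A : Matrix (Fin N) (Fin N) ℝ} (hA : ∀ i j, 0 ≤ A i j)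
    {v : Fin N → ℝ} (hv : ∀ i, 0 < v i) {c : ℝ} (hc : 0 ≤ c)
    (h : ∀ i, A.mulVec v i ≤ c * v i) : specRad A ≤ c := by
  rw [specRad_def]
  apply Real.sSup_le _ hc
  rintro x ⟨μ, hμ, rfl⟩
  obtain ⟨z, hz0, hz⟩ := exists_eigvec hμ
  obtain ⟨i₀, -, hi₀⟩ := Finset.exists_max_image Finset.univ
    (fun i => ‖z i‖ / v i)
    (Finset.univ_nonempty_iff.mpr (Fin.pos_iff_nonempty.mp hN))
  set t := ‖z i₀‖ / v i₀ with ht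
  obtain ⟨j, hj⟩ := Function.ne_iff.mp hz0
  have htpos : 0 < t :=
    lt_of_lt_of_le (div_pos (by simpa using hj) (hv j)) (hi₀ j (mem_univ j))
  have hle : ∀ j', ‖z j'‖ ≤ t * v j' :=
    fun j' => (div_le_iff₀ (hv j')).mp (hi₀ j' (mem_univ j'))
  have h4 : ‖z i₀‖ = t * v i₀ := by
    rw [ht, div_mul_cancel₀ _ (hv i₀).ne']
  have h1 : ‖μ‖ * ‖z i₀‖ = ‖(cx A).mulVec z i₀‖ := by
    rw [hz]; simp [Pi.smul_apply]
  have h2 : ‖(cx A).mulVec z i₀‖ ≤ ∑ j', A i₀ j' * ‖z j'‖ := by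
    simp only [Matrix.mulVec, dotProduct, cx, Matrix.map_apply]
    refine le_trans (norm_sum_le _ _) (le_of_eq ?_)
    refine Finset.sum_congr rfl fun j' _ => ?_
    rw [norm_mul, Complex.norm_real, Real.norm_eq_abs, abs_of_nonneg (hA i₀ j')]
  have h3 : ∑ j', A i₀ j' * ‖z j'‖ ≤ t * (c * v i₀) := by
    calc ∑ j', A i₀ j' * ‖z j'‖
        ≤ ∑ j', A i₀ j' * (t * v j') :=
          Finset.sum_le_sum fun j' _ => mul_le_mul_of_nonneg_left (hle j') (hA i₀ j')
      _ = t * A.mulVec v i₀ := by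
          simp only [Matrix.mulVec, dotProduct, Finset.mul_sum]
          exact Finset.sum_congr rfl fun j' _ => by ring
      _ ≤ t * (c * v i₀) := mul_le_mul_of_nonneg_left (h i₀) htpos.le
  have := (h1 ▸ h2).trans h3
  rw [h4] at this
  have hpos : 0 < t * v i₀ := mul_pos htpos (hv i₀)
  calc ‖μ‖ = ‖μ‖ * (t * v i₀) / (t * v i₀) := by rw [mul_div_assoc, div_self hpos.ne', mul_one]
    _ ≤ t * (c * v i₀) / (t * v i₀) := by
        have hnum : ‖μ‖ * (t * v i₀) ≤ t * (c * v i₀) := by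
          calc ‖μ‖ * (t * v i₀) = ‖μ‖ * ‖z i₀‖ := by rw [h4]
            _ ≤ t * (c * v i₀) := (h1 ▸ h2).trans h3
        gcongr
    _ = c := by rw [mul_div_mul_left _ _ htpos.ne', mul_div_assoc, div_self (hv i₀).ne', mul_one]

/-- bridge to mathlib's spectralRadius -/
lemma spectralRadius_eq (hN : 0 < N) (A : Matrix (Fin N) (Fin N) ℝ) :
    spectralRadius ℂ (cx A) = ENNReal.ofReal (specRad A) := by
  obtain ⟨μ₀, hμ₀, hab, hub⟩ := specRad_max hN A
  have key : ∀ ν : ℂ, (‖ν‖₊ : ENNReal) = ENNReal.ofReal (‖ν‖) := fun ν => by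
    rw [ofReal_norm]; rfl
  apply le_antisymm
  · rw [spectralRadius]
    refine iSup₂_le fun ν hν => ?_
    rw [key ν]
    exact ENNReal.ofReal_le_ofReal (hub ν hν)
  · have h2 : ENNReal.ofReal (specRad A) = (‖μ₀‖₊ : ENNReal) := by rw [key μ₀, hab]
    rw [h2, spectralRadius]
    exact le_iSup₂ (f := fun k _ => (‖k‖₊ : ENNReal)) μ₀ hμ₀

/-- Collatz–Wielandt lower bound (via Gelfand's formula) -/
lemma cw_lower (hN : 0 < N) {A : Matrix (Fin N) (Fin N) ℝ} (hA : ∀ i j, 0 ≤ A i j)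
    {w : Fin N → ℝ} (hw : ∀ i, 0 ≤ w i) (hw0 : w ≠ 0) {c : ℝ} (hc : 0 ≤ c)
    (h : ∀ i, c * w i ≤ A.mulVec w i) : c ≤ specRad A := by
  by_contra hlt
  push_neg at hlt
  have hc0 : 0 < c := lt_of_le_of_lt (specRad_nonneg hN A) hlt
  -- iterate the inequality
  have key : ∀ k : ℕ, ∀ i, c ^ k * w i ≤ (A ^ k).mulVec w i := by
    intro k
    induction k with
    | zero => intro i; simp [Matrix.one_mulVec]
    | succ k ih =>
      intro i
      have h1 : (A ^ (k + 1)).mulVec w i = A.mulVec ((A ^ k).mulVec w) i := by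
        rw [Matrix.mulVec_mulVec, ← pow_succ']
      have h2 : A.mulVec (fun j => c ^ k * w j) i ≤ A.mulVec ((A ^ k).mulVec w) i :=
        mulVec_mono hA (fun j => ih j) i
      have h3 : A.mulVec (fun j => c ^ k * w j) i = c ^ k * A.mulVec w i := by
        simp only [Matrix.mulVec, dotProduct, Finset.mul_sum]
        exact Finset.sum_congr rfl fun j _ => by ring
      have h4 : c ^ (k + 1) * w i ≤ c ^ k * A.mulVec w i := by
        calc c ^ (k + 1) * w i = c ^ k * (c * w i) := by ring
          _ ≤ c ^ k * A.mulVec w i := mul_le_mul_of_nonneg_left (h i) (by positivity)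
      rw [h1]
      exact h4.trans (h3 ▸ h2)
  obtain ⟨i₀, hi₀⟩ := Function.ne_iff.mp hw0
  have hwi₀ : 0 < w i₀ := (hw i₀).lt_of_ne (fun hh => hi₀ hh.symm)
  set W := ∑ j, w j with hW
  have hWpos : 0 < W :=
    lt_of_lt_of_le hwi₀ (Finset.single_le_sum (fun j _ => hw j) (Finset.mem_univ i₀))
  have hwleW : ∀ j, w j ≤ W :=
    fun j => Finset.single_le_sum (fun t _ => hw t) (Finset.mem_univ j)
  -- row sum lower bound
  have rowsum : ∀ k : ℕ, c ^ k * (w i₀ / W) ≤ ∑ j, (A ^ k) i₀ j := by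
    intro k
    have h1 : c ^ k * w i₀ ≤ ∑ j, (A ^ k) i₀ j * w j := key k i₀
    have h2 : ∑ j, (A ^ k) i₀ j * w j ≤ (∑ j, (A ^ k) i₀ j) * W := by
      rw [Finset.sum_mul]
      exact Finset.sum_le_sum fun j _ =>
        mul_le_mul_of_nonneg_left (hwleW j) (pow_nonneg hA k i₀ j)
    rw [← mul_div_assoc, div_le_iff₀ hWpos]
    exact h1.trans h2
  -- norm lower bound
  have normge : ∀ k : ℕ, ∑ j, (A ^ k) i₀ j ≤ ‖(cx A) ^ k‖ := by
    intro k
    rw [← cx_pow]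
    have h1 : (∑ j, ‖(cx (A ^ k)) i₀ j‖₊) ≤ ‖cx (A ^ k)‖₊ := by
      rw [Matrix.linfty_opNNNorm_def]
      exact Finset.le_sup (f := fun i => ∑ j, ‖(cx (A ^ k)) i j‖₊) (Finset.mem_univ i₀)
    have h2 : ((∑ j, ‖(cx (A ^ k)) i₀ j‖₊ : NNReal) : ℝ) = ∑ j, (A ^ k) i₀ j := by
      push_cast
      refine Finset.sum_congr rfl fun j _ => ?_
      simp only [cx, Matrix.map_apply, coe_nnnorm, Complex.norm_real, Real.norm_eq_abs]
      exact abs_of_nonneg (pow_nonneg hA k i₀ j)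
    calc ∑ j, (A ^ k) i₀ j = ((∑ j, ‖(cx (A ^ k)) i₀ j‖₊ : NNReal) : ℝ) := h2.symm
      _ ≤ ((‖cx (A ^ k)‖₊ : NNReal) : ℝ) := by exact_mod_cast h1
      _ = ‖cx (A ^ k)‖ := rfl
  -- Gelfand
  set d := (specRad A + c) / 2 with hd
  have hd1 : specRad A < d := by simp only [hd]; linarith
  have hd2 : d < c := by simp only [hd]; linarith
  have hdpos : 0 < d := lt_of_le_of_lt (specRad_nonneg hN A) hd1
  have hgel := spectrum.pow_norm_pow_one_div_tendsto_nhds_spectralRadius (cx A)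
  rw [spectralRadius_eq hN A] at hgel
  have hev : ∀ᶠ k : ℕ in atTop,
      ENNReal.ofReal (‖(cx A) ^ k‖ ^ (1 / k : ℝ)) < ENNReal.ofReal d :=
    hgel.eventually_lt_const ((ENNReal.ofReal_lt_ofReal_iff hdpos).mpr hd1)
  have hcd : 1 < c / d := (one_lt_div hdpos).mpr hd2
  have hev2 : ∀ᶠ k : ℕ in atTop, W / w i₀ < (c / d) ^ k :=
    (tendsto_pow_atTop_atTop_of_one_lt hcd).eventually_gt_atTop (W / w i₀)
  obtain ⟨k, ⟨hk1, hk2⟩, hk3⟩ := ((hev.and hev2).and (eventually_ge_atTop 1)).exists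
  -- convert the ENNReal inequality to a real one
  have hx0 : (0:ℝ) ≤ ‖(cx A) ^ k‖ := norm_nonneg _
  have hreal : ‖(cx A) ^ k‖ ^ (1 / (k:ℕ) : ℝ) < d := by
    have := (ENNReal.ofReal_lt_ofReal_iff hdpos).mp hk1
    exact this
  have hxk : ‖(cx A) ^ k‖ < d ^ k := by
    have hne : (k : ℕ) ≠ 0 := by omega
    have h5 : (‖(cx A) ^ k‖ ^ ((k:ℝ)⁻¹)) ^ k = ‖(cx A) ^ k‖ :=
      Real.rpow_inv_natCast_pow hx0 hne
    rw [one_div] at hreal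
    calc ‖(cx A) ^ k‖ = (‖(cx A) ^ k‖ ^ ((k:ℝ)⁻¹)) ^ k := h5.symm
      _ < d ^ k := by
          apply pow_lt_pow_left₀ hreal (Real.rpow_nonneg hx0 _)
          omega
  -- contradiction
  have hfinal : d ^ k < c ^ k * (w i₀ / W) := by
    rw [div_pow, div_lt_div_iff₀ hwi₀ (by positivity)] at hk2
    rw [← mul_div_assoc, lt_div_iff₀ hWpos]
    linarith
  have := (rowsum k).trans ((normge k).trans hxk.le)
  linarith

/-- the smasher matrix for an irreducible matrix -/
lemma exists_smasher {A : Matrix (Fin N) (Fin N) ℝ} (hA : ∀ i j, 0 ≤ A i j)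
    (hirr : ∀ i j, ∃ k, 1 ≤ k ∧ 0 < (A ^ k) i j) :
    ∃ s : Matrix (Fin N) (Fin N) ℝ, s * A = A * s ∧ (∀ i j, 0 ≤ s i j) ∧
      ∀ z : Fin N → ℝ, (∀ i, 0 ≤ z i) → z ≠ 0 → ∀ i, 0 < s.mulVec z i := by
  choose f hf1 hf2 using hirr
  set K := Finset.sup Finset.univ (fun p : Fin N × Fin N => f p.1 p.2) with hK
  refine ⟨∑ k ∈ Finset.range (K + 1), A ^ k, ?_, ?_, ?_⟩
  · rw [Finset.sum_mul, Finset.mul_sum]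
    exact Finset.sum_congr rfl fun k _ => by rw [← pow_succ, ← pow_succ']
  · intro i j
    rw [Matrix.sum_apply]
    exact Finset.sum_nonneg fun k _ => pow_nonneg hA k i j
  · intro z hz hz0 i
    obtain ⟨j₀, hj₀⟩ := Function.ne_iff.mp hz0
    have hzj₀ : 0 < z j₀ := (hz j₀).lt_of_ne (fun hh => hj₀ hh.symm)
    have hmem : f i j₀ ∈ Finset.range (K + 1) := by
      rw [Finset.mem_range]
      have : f i j₀ ≤ K :=
        Finset.le_sup (f := fun p : Fin N × Fin N => f p.1 p.2) (Finset.mem_univ (i, j₀))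
      omega
    have hsum : (∑ k ∈ Finset.range (K + 1), A ^ k).mulVec z i
        = ∑ k ∈ Finset.range (K + 1), (A ^ k).mulVec z i := by
      simp only [Matrix.mulVec, dotProduct, Matrix.sum_apply, Finset.sum_mul]
      rw [Finset.sum_comm]
    rw [hsum]
    refine Finset.sum_pos' (fun k _ => mulVec_nonneg (pow_nonneg hA k) hz i)
      ⟨f i j₀, hmem, ?_⟩
    exact lt_of_lt_of_le (mul_pos (hf2 i j₀) hzj₀)
      (single_le_mulVec (pow_nonneg hA _) hz i j₀)

lemma strict_lower (hN : 0 < N) {A : Matrix (Fin N) (Fin N) ℝ} (hA : ∀ i j, 0 ≤ A i j)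
    (hirr : ∀ i j, ∃ k, 1 ≤ k ∧ 0 < (A ^ k) i j)
    {w : Fin N → ℝ} (hw : ∀ i, 0 ≤ w i) (hw0 : w ≠ 0) {c : ℝ} (hc : 0 ≤ c)
    (h : ∀ i, c * w i ≤ A.mulVec w i) (hne : A.mulVec w ≠ c • w) : c < specRad A := by
  obtain ⟨s, hcomm, hs0, hspos⟩ := exists_smasher hA hirr
  set z : Fin N → ℝ := fun i => A.mulVec w i - c * w i with hzdef
  have hz0 : ∀ i, 0 ≤ z i := fun i => by simp only [hzdef]; linarith [h i]
  have hzne : z ≠ 0 := by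
    intro hh
    apply hne
    funext i
    have h2 := congrFun hh i
    simp only [hzdef, Pi.zero_apply] at h2
    simp only [Pi.smul_apply, smul_eq_mul]
    linarith
  set w' := s.mulVec w with hw'
  have hw'pos : ∀ i, 0 < w' i := hspos w hw hw0
  have hAw' : A.mulVec w = c • w + z := by
    funext i
    simp only [hzdef, Pi.add_apply, Pi.smul_apply, smul_eq_mul]
    ring
  have hkey : A.mulVec w' = c • w' + s.mulVec z := by
    rw [hw', Matrix.mulVec_mulVec, ← hcomm, ← Matrix.mulVec_mulVec, hAw',
      Matrix.mulVec_add, Matrix.mulVec_smul]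
  obtain ⟨i₁, -, hi₁⟩ := Finset.exists_min_image Finset.univ
    (fun i => A.mulVec w' i / w' i)
    (Finset.univ_nonempty_iff.mpr (Fin.pos_iff_nonempty.mp hN))
  set c' := A.mulVec w' i₁ / w' i₁ with hc'
  have hc'gt : c < c' := by
    rw [hc', lt_div_iff₀ (hw'pos i₁)]
    have h3 := congrFun hkey i₁
    simp only [Pi.add_apply, Pi.smul_apply, smul_eq_mul] at h3
    have := hspos z hz0 hzne i₁
    linarith
  have hge : ∀ i, c' * w' i ≤ A.mulVec w' i := by
    intro i
    have h4 : c' ≤ A.mulVec w' i / w' i := hi₁ i (Finset.mem_univ i)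
    rw [le_div_iff₀ (hw'pos i)] at h4
    linarith
  have hfin : c' ≤ specRad A :=
    cw_lower hN hA (fun i => (hw'pos i).le)
      (Function.ne_iff.mpr ⟨i₁, (hw'pos i₁).ne'⟩) (hc.trans hc'gt.le) hge
  exact lt_of_lt_of_le hc'gt hfin

lemma strict_upper (hN : 0 < N) {A : Matrix (Fin N) (Fin N) ℝ} (hA : ∀ i j, 0 ≤ A i j)
    (hirr : ∀ i j, ∃ k, 1 ≤ k ∧ 0 < (A ^ k) i j)
    {w : Fin N → ℝ} (hw : ∀ i, 0 ≤ w i) (hw0 : w ≠ 0) {c : ℝ}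
    (h : ∀ i, A.mulVec w i ≤ c * w i) (hne : A.mulVec w ≠ c • w) : specRad A < c := by
  obtain ⟨s, hcomm, hs0, hspos⟩ := exists_smasher hA hirr
  set z : Fin N → ℝ := fun i => c * w i - A.mulVec w i with hzdef
  have hz0 : ∀ i, 0 ≤ z i := fun i => by simp only [hzdef]; linarith [h i]
  have hzne : z ≠ 0 := by
    intro hh
    apply hne
    funext i
    have h2 := congrFun hh i
    simp only [hzdef, Pi.zero_apply] at h2
    simp only [Pi.smul_apply, smul_eq_mul]
    linarith
  set w' := s.mulVec w with hw'
  have hw'pos : ∀ i, 0 < w' i := hspos w hw hw0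
  have hAw' : A.mulVec w = c • w - z := by
    funext i
    simp only [hzdef, Pi.sub_apply, Pi.smul_apply, smul_eq_mul]
    ring
  have hkey : A.mulVec w' = c • w' - s.mulVec z := by
    rw [hw', Matrix.mulVec_mulVec, ← hcomm, ← Matrix.mulVec_mulVec, hAw',
      Matrix.mulVec_sub, Matrix.mulVec_smul]
  obtain ⟨i₁, -, hi₁⟩ := Finset.exists_max_image Finset.univ
    (fun i => A.mulVec w' i / w' i)
    (Finset.univ_nonempty_iff.mpr (Fin.pos_iff_nonempty.mp hN))
  set c' := A.mulVec w' i₁ / w' i₁ with hc'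
  have hc'lt : c' < c := by
    rw [hc', div_lt_iff₀ (hw'pos i₁)]
    have h3 := congrFun hkey i₁
    simp only [Pi.sub_apply, Pi.smul_apply, smul_eq_mul] at h3
    have := hspos z hz0 hzne i₁
    linarith
  have hle : ∀ i, A.mulVec w' i ≤ c' * w' i := by
    intro i
    have h4 : A.mulVec w' i / w' i ≤ c' := hi₁ i (Finset.mem_univ i)
    rw [div_le_iff₀ (hw'pos i)] at h4
    linarith
  have hc'0 : 0 ≤ c' := by
    rw [hc']
    exact div_nonneg (mulVec_nonneg hA (fun i => (hw'pos i).le) i₁) (hw'pos i₁).le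
  have hfin : specRad A ≤ c' := cw_upper hN hA hw'pos hc'0 hle
  exact lt_of_le_of_lt hfin hc'lt

lemma pow_eig {A : Matrix (Fin N) (Fin N) ℝ} {u : Fin N → ℝ} {ρ : ℝ}
    (h : A.mulVec u = ρ • u) (k : ℕ) : (A ^ k).mulVec u = ρ ^ k • u := by
  induction k with
  | zero => simp [Matrix.one_mulVec]
  | succ k ih =>
    rw [pow_succ, ← Matrix.mulVec_mulVec, h, Matrix.mulVec_smul, ih, smul_smul, pow_succ]
    ring_nf

/-- weak Perron–Frobenius for irreducible nonnegative matrices -/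
lemma perron (hN : 0 < N) {A : Matrix (Fin N) (Fin N) ℝ} (hA : ∀ i j, 0 ≤ A i j)
    (hirr : ∀ i j, ∃ k, 1 ≤ k ∧ 0 < (A ^ k) i j) :
    ∃ u : Fin N → ℝ, (∀ i, 0 < u i) ∧ A.mulVec u = specRad A • u ∧ 0 < specRad A := by
  obtain ⟨μ₀, hμ₀, hab, -⟩ := specRad_max hN A
  obtain ⟨zv, hzv0, hzv⟩ := exists_eigvec hμ₀
  set ρ := specRad A with hρdef
  set u : Fin N → ℝ := fun i => ‖zv i‖ with hu
  have hu0 : ∀ i, 0 ≤ u i := fun i => norm_nonneg _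
  obtain ⟨j₀, hj₀⟩ := Function.ne_iff.mp hzv0
  have huj₀ : 0 < u j₀ := by simpa [hu] using hj₀
  have hune : u ≠ 0 := Function.ne_iff.mpr ⟨j₀, huj₀.ne'⟩
  have hge : ∀ i, ρ * u i ≤ A.mulVec u i := by
    intro i
    have h1 : ρ * u i = ‖(cx A).mulVec zv i‖ := by
      rw [hzv]
      simp only [Pi.smul_apply, smul_eq_mul, norm_mul, hu]
      rw [hab]
    have h2 : ‖(cx A).mulVec zv i‖ ≤ A.mulVec u i := by
      simp only [Matrix.mulVec, dotProduct, cx, Matrix.map_apply, hu]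
      refine le_trans (norm_sum_le _ _) (le_of_eq ?_)
      refine Finset.sum_congr rfl fun j _ => ?_
      rw [norm_mul, Complex.norm_real, Real.norm_eq_abs, abs_of_nonneg (hA i j)]
    linarith [h1 ▸ h2]
  have hρ0 : 0 ≤ ρ := specRad_nonneg hN A
  have heq : A.mulVec u = ρ • u := by
    by_contra hne
    exact absurd (strict_lower hN hA hirr hu0 hune hρ0 hge hne) (lt_irrefl ρ)
  have hρpos : 0 < ρ := by
    rcases hρ0.lt_or_eq with hh | hh
    · exact hh
    · exfalso
      obtain ⟨k, hk1, hk2⟩ := hirr j₀ j₀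
      have h6 := congrFun (pow_eig heq k) j₀
      simp only [Pi.smul_apply, smul_eq_mul] at h6
      have h7 : (0:ℝ) < (A ^ k).mulVec u j₀ :=
        lt_of_lt_of_le (mul_pos hk2 huj₀) (single_le_mulVec (pow_nonneg hA k) hu0 j₀ j₀)
      rw [h6, ← hh, zero_pow (by omega), zero_mul] at h7
      exact lt_irrefl 0 h7
  have hupos : ∀ i, 0 < u i := by
    intro i
    obtain ⟨k, hk1, hk2⟩ := hirr i j₀
    have h6 := congrFun (pow_eig heq k) i
    simp only [Pi.smul_apply, smul_eq_mul] at h6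
    have h7 : (0:ℝ) < (A ^ k).mulVec u i :=
      lt_of_lt_of_le (mul_pos hk2 huj₀) (single_le_mulVec (pow_nonneg hA k) hu0 i j₀)
    rw [h6] at h7
    nlinarith [pow_pos hρpos k, hu0 i]
  exact ⟨u, hupos, heq, hρpos⟩

section ModMat

variable {n : ℕ} {M : Matrix (Fin n) (Fin n) ℝ} {l m : Fin n} {α 𝓛 θ : ℝ}

lemma modMat_zero_zero : modMat M l m α 𝓛 θ 0 0 = 0 := by
  simp [modMat, (Fin.succ_ne_zero m).symm]

lemma modMat_zero_succ (j : Fin n) :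
    modMat M l m α 𝓛 θ 0 j.succ = if j = m then α else 0 := by
  simp [modMat, Fin.succ_inj]

lemma modMat_succ_zero (i : Fin n) :
    modMat M l m α 𝓛 θ i.succ 0 = if i = l then θ else 0 := by
  simp [modMat, Fin.succ_ne_zero, Fin.succ_inj]

lemma modMat_succ_succ (i j : Fin n) :
    modMat M l m α 𝓛 θ i.succ j.succ = if i = l ∧ j = m then 𝓛 else M i j := by
  simp [modMat, Fin.succ_ne_zero, Fin.succ_inj, Fin.pred_succ]

lemma modMat_nonneg (hM0 : ∀ i j, 0 ≤ M i j) (hα : 0 ≤ α) (h𝓛 : 0 ≤ 𝓛) (hθ : 0 ≤ θ) :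
    ∀ a b, 0 ≤ modMat M l m α 𝓛 θ a b := by
  intro a b
  induction a using Fin.cases with
  | zero =>
    induction b using Fin.cases with
    | zero => rw [modMat_zero_zero]
    | succ j => rw [modMat_zero_succ]; split <;> simp [hα]
  | succ i =>
    induction b using Fin.cases with
    | zero => rw [modMat_succ_zero]; split <;> simp [hθ]
    | succ j => rw [modMat_succ_succ]; split <;> simp [h𝓛, hM0]

lemma chain_pos {N : ℕ} {P : Matrix (Fin N) (Fin N) ℝ} (hP : ∀ i j, 0 ≤ P i j)
    {a b c : Fin N} {k1 k2 : ℕ} (h1 : 0 < (P ^ k1) a b) (h2 : 0 < (P ^ k2) b c) :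
    0 < (P ^ (k1 + k2)) a c := by
  rw [pow_add, Matrix.mul_apply]
  exact lt_of_lt_of_le (mul_pos h1 h2)
    (Finset.single_le_sum
      (fun t _ => mul_nonneg (pow_nonneg hP k1 a t) (pow_nonneg hP k2 t c))
      (Finset.mem_univ b))

lemma modMat_irr (hn : 1 ≤ n) (hM0 : ∀ i j, 0 ≤ M i j)
    (hirr : ∀ i j, ∃ k, 1 ≤ k ∧ 0 < (M ^ k) i j) (hα : 0 < α) (h𝓛 : 0 ≤ 𝓛) (hθ : 0 < θ) :
    ∀ a b, ∃ k, 1 ≤ k ∧ 0 < ((modMat M l m α 𝓛 θ) ^ k) a b := by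
  set P := modMat M l m α 𝓛 θ with hPdef
  have hP : ∀ a b, 0 ≤ P a b := modMat_nonneg hM0 hα.le h𝓛 hθ.le
  have Qtrans : ∀ a b c : Fin (n+1), (∃ k, 1 ≤ k ∧ 0 < (P ^ k) a b) →
      (∃ k, 1 ≤ k ∧ 0 < (P ^ k) b c) → (∃ k, 1 ≤ k ∧ 0 < (P ^ k) a c) := by
    rintro a b c ⟨k1, hk1, h1⟩ ⟨k2, hk2, h2⟩
    exact ⟨k1 + k2, by omega, chain_pos hP h1 h2⟩
  have Qedge : ∀ a b : Fin (n+1), 0 < P a b → ∃ k, 1 ≤ k ∧ 0 < (P ^ k) a b :=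
    fun a b h => ⟨1, le_refl 1, by rwa [pow_one]⟩
  have hedgel0 : 0 < P l.succ 0 := by rw [hPdef, modMat_succ_zero, if_pos rfl]; exact hθ
  have hedge0m : 0 < P 0 m.succ := by rw [hPdef, modMat_zero_succ, if_pos rfl]; exact hα
  have Qstep : ∀ i j : Fin n, 0 < M i j → ∃ k, 1 ≤ k ∧ 0 < (P ^ k) i.succ j.succ := by
    intro i j hij
    by_cases hc : i = l ∧ j = m
    · obtain ⟨rfl, rfl⟩ := hc
      exact Qtrans _ 0 _ (Qedge _ _ hedgel0) (Qedge _ _ hedge0m)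
    · refine Qedge _ _ ?_
      rw [hPdef, modMat_succ_succ, if_neg hc]
      exact hij
  have Qlift : ∀ k, 1 ≤ k → ∀ i j : Fin n, 0 < (M ^ k) i j →
      ∃ k', 1 ≤ k' ∧ 0 < (P ^ k') i.succ j.succ := by
    intro k
    induction k with
    | zero => omega
    | succ k ih =>
      intro _ i j hpos
      rcases Nat.eq_zero_or_pos k with hk | hk
      · subst hk
        rw [pow_one] at hpos
        exact Qstep i j hpos
      · rw [pow_succ', Matrix.mul_apply] at hpos
        have hex : ∃ t, 0 < M i t * (M ^ k) t j := by
          by_contra hcon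
          push_neg at hcon
          have : ∑ t, M i t * (M ^ k) t j ≤ 0 := Finset.sum_nonpos fun t _ => hcon t
          linarith
        obtain ⟨t, ht⟩ := hex
        have h1 : 0 < M i t := by
          rcases (mul_pos_iff.mp ht) with ⟨h, _⟩ | ⟨h, _⟩
          · exact h
          · exact absurd h (not_lt.mpr (hM0 i t))
        have h2 : 0 < (M ^ k) t j := by
          rcases (mul_pos_iff.mp ht) with ⟨_, h⟩ | ⟨_, h⟩
          · exact h
          · exact absurd h (not_lt.mpr (pow_nonneg hM0 k t j))
        exact Qtrans _ _ _ (Qstep i t h1) (ih hk t j h2)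
  have Qlift' : ∀ i j : Fin n, ∃ k, 1 ≤ k ∧ 0 < (P ^ k) i.succ j.succ := by
    intro i j
    obtain ⟨k, hk1, hk2⟩ := hirr i j
    exact Qlift k hk1 i j hk2
  intro a b
  induction a using Fin.cases with
  | zero =>
    induction b using Fin.cases with
    | zero =>
      exact Qtrans _ m.succ _ (Qedge _ _ hedge0m)
        (Qtrans _ l.succ _ (Qlift' m l) (Qedge _ _ hedgel0))
    | succ j => exact Qtrans _ m.succ _ (Qedge _ _ hedge0m) (Qlift' m j)
  | succ i =>
    induction b using Fin.cases with
    | zero => exact Qtrans _ l.succ _ (Qlift' i l) (Qedge _ _ hedgel0)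
    | succ j => exact Qlift' i j

lemma modMat_mulVec_zero (c : ℝ) (u : Fin n → ℝ) :
    (modMat M l m α 𝓛 θ).mulVec (Fin.cases c u) 0 = α * u m := by
  simp only [Matrix.mulVec, dotProduct]
  rw [Fin.sum_univ_succ, modMat_zero_zero, Fin.cases_zero, zero_mul, zero_add]
  have key : ∀ j : Fin n, modMat M l m α 𝓛 θ 0 j.succ *
      (Fin.cases c u : Fin (n+1) → ℝ) j.succ = if j = m then α * u j else 0 := by
    intro j
    rw [modMat_zero_succ]
    simp only [Fin.cases_succ]
    split <;> simp
  rw [Finset.sum_congr rfl (fun j _ => key j),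
    Finset.sum_ite_eq' Finset.univ m (fun j => α * u j)]
  simp

lemma modMat_mulVec_succ_ne (c : ℝ) (u : Fin n → ℝ) (i : Fin n) (hi : i ≠ l) :
    (modMat M l m α 𝓛 θ).mulVec (Fin.cases c u) i.succ = M.mulVec u i := by
  simp only [Matrix.mulVec, dotProduct]
  rw [Fin.sum_univ_succ, modMat_succ_zero, if_neg hi, zero_mul, zero_add]
  refine Finset.sum_congr rfl fun j _ => ?_
  rw [modMat_succ_succ, if_neg (by tauto)]
  simp only [Fin.cases_succ]

lemma modMat_mulVec_succ_l (c : ℝ) (u : Fin n → ℝ) :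
    (modMat M l m α 𝓛 θ).mulVec (Fin.cases c u) l.succ
      = θ * c + M.mulVec u l + (𝓛 - M l m) * u m := by
  simp only [Matrix.mulVec, dotProduct]
  rw [Fin.sum_univ_succ, modMat_succ_zero, if_pos rfl, Fin.cases_zero]
  have key : ∀ j : Fin n, modMat M l m α 𝓛 θ l.succ j.succ *
      (Fin.cases c u : Fin (n+1) → ℝ) j.succ
      = M l j * u j + (if j = m then (𝓛 - M l m) * u j else 0) := by
    intro j
    rw [modMat_succ_succ]
    simp only [Fin.cases_succ]
    by_cases hj : j = m
    · subst hj
      simp only [and_self, if_true, eq_self_iff_true]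
      ring
    · rw [if_neg (by tauto), if_neg hj, add_zero]
  rw [Finset.sum_congr rfl (fun j _ => key j), Finset.sum_add_distrib,
    Finset.sum_ite_eq' Finset.univ m (fun j => (𝓛 - M l m) * u j)]
  simp only [Finset.mem_univ, if_true]
  ring

end ModMat

end SpecRadPF

/-- For a nonnegative irreducible matrix `M` and the modified matrix `M_θ`:
(1) `θ ≤ ρ(M_θ) ≤ ρ(M)` iff `θ ≤ ρ(M)`; (2) `ρ(M) < ρ(M_θ) < θ` iff `θ > ρ(M)`. -/
theorem specRad_modMat_irreducible
    {n : ℕ} (hn : 1 ≤ n) (M : Matrix (Fin n) (Fin n) ℝ)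
    (hM0 : ∀ i j, 0 ≤ M i j)
    (hirr : ∀ i j, ∃ k, 1 ≤ k ∧ 0 < (M ^ k) i j)
    (l m : Fin n) (α 𝓛 : ℝ) (hα : 0 < α) (h𝓛 : 0 ≤ 𝓛) (hsum : α + 𝓛 = M l m)
    (θ : ℝ) (hθ : 0 < θ) :
    ((θ ≤ specRad (modMat M l m α 𝓛 θ) ∧ specRad (modMat M l m α 𝓛 θ) ≤ specRad M) ↔
      θ ≤ specRad M) ∧
    ((specRad M < specRad (modMat M l m α 𝓛 θ) ∧ specRad (modMat M l m α 𝓛 θ) < θ) ↔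
      θ > specRad M) := by
  classical
  have hn0 : 0 < n := hn
  obtain ⟨u, hupos, hMu, hρpos⟩ := SpecRadPF.perron hn0 hM0 hirr
  set ρ := specRad M with hρdef
  set P := modMat M l m α 𝓛 θ with hPdef
  set σ := specRad P with hσdef
  have hN1 : 0 < n + 1 := Nat.succ_pos n
  have hP0 : ∀ a b, 0 ≤ P a b := SpecRadPF.modMat_nonneg hM0 hα.le h𝓛 hθ.le
  have hPirr : ∀ a b, ∃ k, 1 ≤ k ∧ 0 < (P ^ k) a b :=
    SpecRadPF.modMat_irr hn hM0 hirr hα h𝓛 hθ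
  have hum : 0 < u m := hupos m
  have h𝓛M : 𝓛 - M l m = -α := by linarith
  set w : Fin (n+1) → ℝ := Fin.cases (α * u m / θ) u with hwdef
  have hw0 : w 0 = α * u m / θ := rfl
  have hwsucc : ∀ i : Fin n, w i.succ = u i := fun i => by rw [hwdef]; simp
  have hwpos : ∀ a, 0 < w a := by
    intro a
    induction a using Fin.cases with
    | zero => rw [hw0]; positivity
    | succ i => rw [hwsucc]; exact hupos i
  have hwne : w ≠ 0 := Function.ne_iff.mpr ⟨0, (hwpos 0).ne'⟩
  have hPw0 : P.mulVec w 0 = α * u m := SpecRadPF.modMat_mulVec_zero _ _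
  have hPws : ∀ i : Fin n, P.mulVec w i.succ = ρ * u i := by
    intro i
    by_cases hi : i = l
    · subst hi
      have h1 : P.mulVec w i.succ = θ * (α * u m / θ) + M.mulVec u i + (𝓛 - M i m) * u m :=
        SpecRadPF.modMat_mulVec_succ_l _ _
      rw [h1, hMu, h𝓛M, mul_div_assoc', mul_div_cancel_left₀ _ hθ.ne']
      simp only [Pi.smul_apply, smul_eq_mul]
      ring
    · have h1 : P.mulVec w i.succ = M.mulVec u i :=
        SpecRadPF.modMat_mulVec_succ_ne _ _ i hi
      rw [h1, hMu]
      simp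
  by_cases hcase : θ ≤ ρ
  · -- case θ ≤ ρ
    have hA1 : θ ≤ σ := by
      refine SpecRadPF.cw_lower hN1 hP0 (fun a => (hwpos a).le) hwne hθ.le ?_
      intro a
      induction a using Fin.cases with
      | zero =>
        rw [hPw0, hw0, mul_div_assoc', mul_div_cancel_left₀ _ hθ.ne']
      | succ i =>
        rw [hPws, hwsucc]
        exact mul_le_mul_of_nonneg_right hcase (hupos i).le
    have hA2 : σ ≤ ρ := by
      set v : Fin (n+1) → ℝ := Fin.cases (α * u m / ρ) u with hvdef
      have hv0 : v 0 = α * u m / ρ := rfl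
      have hvsucc : ∀ i : Fin n, v i.succ = u i := fun i => by rw [hvdef]; simp
      have hvpos : ∀ a, 0 < v a := by
        intro a
        induction a using Fin.cases with
        | zero => rw [hv0]; positivity
        | succ i => rw [hvsucc]; exact hupos i
      refine SpecRadPF.cw_upper hN1 hP0 hvpos hρpos.le ?_
      intro a
      induction a using Fin.cases with
      | zero =>
        have h1 : P.mulVec v 0 = α * u m := SpecRadPF.modMat_mulVec_zero _ _
        rw [h1, hv0, mul_div_assoc', mul_div_cancel_left₀ _ hρpos.ne']
      | succ i =>
        by_cases hi : i = l
        · subst hi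
          have h1 : P.mulVec v i.succ
              = θ * (α * u m / ρ) + M.mulVec u i + (𝓛 - M i m) * u m :=
            SpecRadPF.modMat_mulVec_succ_l _ _
          rw [h1, hMu, h𝓛M, hvsucc]
          simp only [Pi.smul_apply, smul_eq_mul]
          have hkey : θ * (α * u m / ρ) ≤ α * u m := by
            rw [mul_div_assoc', div_le_iff₀ hρpos]
            nlinarith [mul_le_mul_of_nonneg_right hcase (mul_pos hα hum).le]
          linarith
        · have h1 : P.mulVec v i.succ = M.mulVec u i :=
            SpecRadPF.modMat_mulVec_succ_ne _ _ i hi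
          rw [h1, hMu, hvsucc]
          simp
    refine ⟨⟨fun _ => hcase, fun _ => ⟨hA1, hA2⟩⟩, ?_, ?_⟩
    · rintro ⟨h1, h2⟩
      exact absurd hA2 (not_le.mpr h1)
    · intro hgt
      exact absurd hcase (not_le.mpr hgt)
  · -- case ρ < θ
    push_neg at hcase
    have hB1 : ρ < σ := by
      refine SpecRadPF.strict_lower hN1 hP0 hPirr (fun a => (hwpos a).le) hwne hρpos.le ?_ ?_
      · intro a
        induction a using Fin.cases with
        | zero =>
          rw [hPw0, hw0, mul_div_assoc', div_le_iff₀ hθ]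
          nlinarith [mul_le_mul_of_nonneg_right hcase.le (mul_pos hα hum).le]
        | succ i => rw [hPws, hwsucc]
      · intro heq
        have h2 := congrFun heq 0
        rw [hPw0] at h2
        simp only [Pi.smul_apply, smul_eq_mul] at h2
        rw [hw0, mul_div_assoc', eq_div_iff hθ.ne'] at h2
        nlinarith [mul_pos (sub_pos.mpr hcase) (mul_pos hα hum)]
    have hB2 : σ < θ := by
      refine SpecRadPF.strict_upper hN1 hP0 hPirr (fun a => (hwpos a).le) hwne ?_ ?_
      · intro a
        induction a using Fin.cases with
        | zero =>
          rw [hPw0, hw0, mul_div_assoc', mul_div_cancel_left₀ _ hθ.ne']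
        | succ i =>
          rw [hPws, hwsucc]
          exact mul_le_mul_of_nonneg_right hcase.le (hupos i).le
      · intro heq
        have h2 := congrFun heq l.succ
        rw [hPws l] at h2
        simp only [Pi.smul_apply, smul_eq_mul] at h2
        rw [hwsucc l] at h2
        nlinarith [hupos l]
    refine ⟨⟨?_, ?_⟩, fun _ => hcase, fun _ => ⟨hB1, hB2⟩⟩
    · rintro ⟨h1, h2⟩
      exact h1.trans h2
    · intro hle
      exact absurd hle (not_le.mpr hcase)
end
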